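/- Let f be a Hecke-multiplicative function and p a prime with |f(p)| ≤ 1/2. Then for every positive integer n with p² ∤ n, |f(n)·f(p²)| ≤ |f(p²n)|. -/

import Mathlib

open Finset

def HeckeMult (f : ℕ → ℂ) : Prop :=
  f 1 = 1 ∧ ∀ m n : ℕ, 0 < m → 0 < n →
    f m * f n = ∑ d ∈ (Nat.gcd m n).divisors, f (m * n / d ^ 2)

theorem hecke_small_fp (f : ℕ → ℂ) (hf : HeckeMult f) (p : ℕ) (hp : p.Prime)
    (hfp : ‖f p‖ ≤ 1 / 2) (n : ℕ) (hn : 0 < n) (hnd : ¬ p ^ 2 ∣ n) :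
    ‖f n * f (p ^ 2)‖ ≤ ‖f (p ^ 2 * n)‖ := by
  obtain ⟨h1, hrel⟩ := hf
  have hp0 : 0 < p := hp.pos
  have hp2pos : 0 < p ^ 2 := pow_pos hp0 2
  have hfp2 : f (p ^ 2) = f p ^ 2 - 1 := by
    have h := hrel p p hp0 hp0
    rw [Nat.gcd_self, hp.divisors, Finset.sum_pair hp.one_lt.ne] at h
    have e1 : p * p / 1 ^ 2 = p ^ 2 := by rw [one_pow, Nat.div_one, sq]
    have e2 : p * p / p ^ 2 = 1 := by rw [← sq, Nat.div_self hp2pos]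
    rw [e1, e2, h1] at h
    linear_combination -h
  by_cases hpn : p ∣ n
  · -- n = p * m with p ∤ m
    obtain ⟨m, rfl⟩ := hpn
    have hpm : ¬ p ∣ m := fun hd => hnd (by obtain ⟨k, rfl⟩ := hd; exact ⟨k, by ring⟩)
    have hg : Nat.gcd (p ^ 2) (p * m) = p := by
      have : Nat.gcd (p * p) (p * m) = p * Nat.gcd p m := Nat.gcd_mul_left p p m
      rw [sq, this, Nat.Coprime.gcd_eq_one ((hp.coprime_iff_not_dvd).mpr hpm), mul_one]
    have h := hrel (p ^ 2) (p * m) hp2pos hn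
    rw [hg, hp.divisors, Finset.sum_pair hp.one_lt.ne] at h
    have e1 : p ^ 2 * (p * m) / 1 ^ 2 = p ^ 2 * (p * m) := by simp
    have e2 : p ^ 2 * (p * m) / p ^ 2 = p * m := Nat.mul_div_cancel_left _ hp2pos
    rw [e1, e2] at h
    have key : f (p ^ 2 * (p * m)) = f (p * m) * (f p ^ 2 - 2) := by
      linear_combination -h + f (p * m) * hfp2
    rw [key, hfp2, norm_mul, norm_mul]
    apply mul_le_mul_of_nonneg_left _ (norm_nonneg _)
    have h2 : ‖f p ^ 2‖ ≤ 1 / 4 := by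
      rw [norm_pow]
      calc ‖f p‖ ^ 2 ≤ (1/2) ^ 2 := by
            apply pow_le_pow_left₀ (norm_nonneg _) hfp
        _ = 1 / 4 := by norm_num
    have hle : ‖f p ^ 2 - 1‖ ≤ 5 / 4 := by
      calc ‖f p ^ 2 - 1‖ ≤ ‖f p ^ 2‖ + ‖(1:ℂ)‖ :=
            norm_sub_le _ _
        _ ≤ 1 / 4 + 1 := by simpa using h2
        _ = 5 / 4 := by norm_num
    have hge : 7 / 4 ≤ ‖f p ^ 2 - 2‖ := by
      have h2abs : ‖(2 : ℂ)‖ = 2 := by simp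
      have hth : ‖(2 : ℂ)‖ ≤ ‖(2:ℂ) - f p ^ 2‖ + ‖f p ^ 2‖ := by
        have := norm_add_le ((2:ℂ) - f p ^ 2) (f p ^ 2)
        simpa using this
      rw [h2abs] at hth
      have habssub : ‖(2 : ℂ) - f p ^ 2‖ = ‖f p ^ 2 - 2‖ := by
        exact norm_sub_rev _ _
      linarith [hth, h2, habssub.ge, habssub.le]
    linarith
  · -- coprime case: equality
    have hg : Nat.gcd (p ^ 2) n = 1 :=
      Nat.Coprime.gcd_eq_one (((hp.coprime_iff_not_dvd).mpr hpn).pow_left 2)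
    have h := hrel (p ^ 2) n hp2pos hn
    rw [hg, Nat.divisors_one, Finset.sum_singleton] at h
    simp only [one_pow, Nat.div_one] at h
    rw [mul_comm] at h
    rw [← h]
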